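/- The execution-formula composition of planar involutions is associative: for f ∈ P(n,m), g ∈ P(m,p), h ∈ P(p,q), (f;g);h = f;(g;h). -/

import Mathlib

open Sum Relation

/-- A fixed-point free involution. -/
def FPF {X : Type*} (f : X → X) : Prop :=
  Function.Involutive f ∧ ∀ x, f x ≠ x

/-- Condition (PL1) for `f` with respect to the order on `X`:
if `i < j < f i` then `i < f j < f i`. -/
def PL1 {X : Type*} [Preorder X] (f : X → X) : Prop :=
  ∀ i j, i < j → j < f i → i < f j ∧ f j < f i

/-- Incomparability `x # y`. -/
def Incomp {X : Type*} [Preorder X] (x y : X) : Prop :=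
  ¬ (x ≤ y) ∧ ¬ (y ≤ x)

/-- Condition (PL2): if `f i # i`, `i < j` and `j # f j` then `f i < f j`. -/
def PL2 {X : Type*} [Preorder X] (f : X → X) : Prop :=
  ∀ i j, Incomp (f i) i → i < j → Incomp j (f j) → f i < f j

/-- A planar involution on `[n] ⊕ [m]` (with the disjoint-sum partial order):
a fixed-point free involution satisfying (PL1) and (PL2).  These are the
elements of `P(n, m)`. -/
def Planar {n m : ℕ} (f : Fin n ⊕ Fin m → Fin n ⊕ Fin m) : Prop :=
  FPF f ∧ PL1 f ∧ PL2 f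

/-- The graph relation of a function. -/
def graphRel {X : Type*} (f : X → X) : X → X → Prop := fun x y => f x = y

/-- The execution formula: the Geometry-of-Interaction composite of a relation
`R` on `A ⊕ B` and a relation `S` on `B ⊕ C`, defined componentwise by
`θ_{A,A} = R_{A,A} ∪ R_{A,B};S_{B,B};(R_{B,B};S_{B,B})*;R_{B,A}`,
`θ_{A,C} = R_{A,B};(S_{B,B};R_{B,B})*;S_{B,C}`,
`θ_{C,A} = S_{C,B};(R_{B,B};S_{B,B})*;R_{B,A}`,
`θ_{C,C} = S_{C,C} ∪ S_{C,B};R_{B,B};(S_{B,B};R_{B,B})*;S_{B,C}`. -/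
def ExecR {A B C : Type*} (R : A ⊕ B → A ⊕ B → Prop) (S : B ⊕ C → B ⊕ C → Prop) :
    A ⊕ C → A ⊕ C → Prop :=
  let Raa : A → A → Prop := fun i j => R (Sum.inl i) (Sum.inl j)
  let Rab : A → B → Prop := fun i j => R (Sum.inl i) (Sum.inr j)
  let Rba : B → A → Prop := fun i j => R (Sum.inr i) (Sum.inl j)
  let Rbb : B → B → Prop := fun i j => R (Sum.inr i) (Sum.inr j)
  let Sbb : B → B → Prop := fun i j => S (Sum.inl i) (Sum.inl j)
  let Sbc : B → C → Prop := fun i j => S (Sum.inl i) (Sum.inr j)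
  let Scb : C → B → Prop := fun i j => S (Sum.inr i) (Sum.inl j)
  let Scc : C → C → Prop := fun i j => S (Sum.inr i) (Sum.inr j)
  fun x y =>
    match x, y with
    | Sum.inl i, Sum.inl j =>
        Raa i j ∨
          Relation.Comp Rab
            (Relation.Comp Sbb
              (Relation.Comp (Relation.ReflTransGen (Relation.Comp Rbb Sbb)) Rba)) i j
    | Sum.inl i, Sum.inr j =>
        Relation.Comp Rab
          (Relation.Comp (Relation.ReflTransGen (Relation.Comp Sbb Rbb)) Sbc) i j
    | Sum.inr i, Sum.inl j =>
        Relation.Comp Scb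
          (Relation.Comp (Relation.ReflTransGen (Relation.Comp Rbb Sbb)) Rba) i j
    | Sum.inr i, Sum.inr j =>
        Scc i j ∨
          Relation.Comp Scb
            (Relation.Comp Rbb
              (Relation.Comp (Relation.ReflTransGen (Relation.Comp Sbb Rbb)) Sbc)) i j

/-- The execution-formula composite of two involutions, as a function: for
planar involutions the execution relation is the graph of a function, and
`execFun f g` is that function. -/
noncomputable def execFun {n m p : ℕ} (f : Fin n ⊕ Fin m → Fin n ⊕ Fin m)
    (g : Fin m ⊕ Fin p → Fin m ⊕ Fin p) : Fin n ⊕ Fin p → Fin n ⊕ Fin p :=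
  fun x =>
    @dite _ (∃ y, ExecR (graphRel f) (graphRel g) x y) (Classical.propDecidable _)
      (fun h => h.choose) (fun _ => x)

/-- The partial bijection `Cyc(f,g) = f_{m,m} ; g_{m,m}` on `[m]`:
relational composition of the caps of `f` with the cups of `g`. -/
def Cyc {n m p : ℕ} (f : Fin n ⊕ Fin m → Fin n ⊕ Fin m)
    (g : Fin m ⊕ Fin p → Fin m ⊕ Fin p) : Fin m → Fin m → Prop :=
  Relation.Comp (fun i j => f (Sum.inr i) = Sum.inr j)
    (fun i j => g (Sum.inl i) = Sum.inl j)

/-- Iterated relational composition `r^k` (with `r^0` the identity). -/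
def relPow {α : Type*} (r : α → α → Prop) : ℕ → α → α → Prop
  | 0 => Eq
  | k + 1 => Relation.Comp r (relPow r k)

/-- `i` is a cyclic element of `r`: `r^k i i` for some `k > 0`. -/
def Cyclic {α : Type*} (r : α → α → Prop) (i : α) : Prop :=
  ∃ k, 0 < k ∧ relPow r k i i

/-- The cycle (orbit) of `i` under `r`. -/
def cycleOf {α : Type*} (r : α → α → Prop) (i : α) : Set α :=
  {j | ∃ k, relPow r k i j}

/-- `Z(f,g)`: the number of distinct cycles of `Cyc(f,g)`. -/
noncomputable def Z {n m p : ℕ} (f : Fin n ⊕ Fin m → Fin n ⊕ Fin m)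
    (g : Fin m ⊕ Fin p → Fin m ⊕ Fin p) : ℕ :=
  {S : Set (Fin m) | ∃ i, Cyclic (Cyc f g) i ∧ S = cycleOf (Cyc f g) i}.ncard

/-- A morphism `n → m` of the Temperley-Lieb category: a loop count together
with a function on `[n] ⊕ [m]` (required to be a planar involution for
genuine morphisms). -/
def TLHom (n m : ℕ) : Type :=
  ℕ × (Fin n ⊕ Fin m → Fin n ⊕ Fin m)

/-- Composition in the Temperley-Lieb category:
`(t, g) ∘ (s, f) = (s + t + Z(f,g), f;g)`. -/
noncomputable def TLcomp {n m p : ℕ} (F : TLHom n m) (G : TLHom m p) : TLHom n p :=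
  (F.1 + G.1 + Z F.2 G.2, execFun F.2 G.2)

/-- The identity morphism: zero loops and the twist involution `i ↔ i'`. -/
def tlid (n : ℕ) : TLHom n n :=
  (0, Sum.swap)


namespace TLAux

local infixr:80 " ⬝ " => Relation.Comp

def ror {α β : Type*} (p q : α → β → Prop) : α → β → Prop := fun a b => p a b ∨ q a b

variable {α β γ δ : Type*}

theorem comp_eqRel (p : α → β → Prop) : p ⬝ (@Eq β) = p := by
  funext a c; apply propext
  exact ⟨fun ⟨b, h, hb⟩ => hb ▸ h, fun h => ⟨c, h, rfl⟩⟩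

theorem ror_rot (p q k : α → β → Prop) : ror p (ror q k) = ror (ror p k) q := by
  funext a b; apply propext; simp only [ror]; tauto

theorem star_unfold0 (x : α → α → Prop) :
    ReflTransGen x = ror (@Eq α) (ReflTransGen x ⬝ x) := by
  funext a c; apply propext
  constructor
  · intro h
    rcases h.cases_tail with rfl | ⟨c', hst', hlast⟩
    · exact Or.inl rfl
    · exact Or.inr ⟨c', hst', hlast⟩
  · rintro (rfl | ⟨m, hst, hx⟩)
    · exact ReflTransGen.refl
    · exact hst.tail hx

theorem comp_ror (k : α → β → Prop) (p q : β → γ → Prop) :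
    k ⬝ (ror p q) = ror (k ⬝ p) (k ⬝ q) := by
  funext a c; apply propext
  constructor
  · rintro ⟨b, hk, hpq | hpq⟩
    · exact Or.inl ⟨b, hk, hpq⟩
    · exact Or.inr ⟨b, hk, hpq⟩
  · rintro (⟨b, hk, h⟩ | ⟨b, hk, h⟩)
    · exact ⟨b, hk, Or.inl h⟩
    · exact ⟨b, hk, Or.inr h⟩

theorem ror_comp (p q : α → β → Prop) (k : β → γ → Prop) :
    (ror p q) ⬝ k = ror (p ⬝ k) (q ⬝ k) := by
  funext a c; apply propext
  constructor
  · rintro ⟨b, hpq | hpq, hk⟩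
    · exact Or.inl ⟨b, hpq, hk⟩
    · exact Or.inr ⟨b, hpq, hk⟩
  · rintro (⟨b, h, hk⟩ | ⟨b, h, hk⟩)
    · exact ⟨b, Or.inl h, hk⟩
    · exact ⟨b, Or.inr h, hk⟩

/-- sliding lemma : `p (q p)* = (p q)* p` -/
theorem slide (p : α → β → Prop) (q : β → α → Prop) :
    p ⬝ ReflTransGen (q ⬝ p) = ReflTransGen (p ⬝ q) ⬝ p := by
  funext a b; apply propext
  constructor
  · rintro ⟨b0, hp, hstar⟩
    induction hstar with
    | refl => exact ⟨a, ReflTransGen.refl, hp⟩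
    | tail hst hqp ih =>
      obtain ⟨m, hqm, hpm⟩ := hqp
      obtain ⟨a', hstar', hp'⟩ := ih
      exact ⟨m, hstar'.tail ⟨_, hp', hqm⟩, hpm⟩
  · rintro ⟨a', hstar, hp⟩
    induction hstar generalizing b with
    | refl => exact ⟨b, hp, ReflTransGen.refl⟩
    | @tail mid a' hst hpq ih =>
      obtain ⟨m, hpm, hqm⟩ := hpq
      obtain ⟨b0, hpb0, hstar'⟩ := ih m hpm
      exact ⟨b0, hpb0, hstar'.tail ⟨_, hqm, hp⟩⟩

theorem slide' (p : α → β → Prop) (q : β → α → Prop) (k : β → γ → Prop) :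
    p ⬝ (ReflTransGen (q ⬝ p) ⬝ k) = ReflTransGen (p ⬝ q) ⬝ (p ⬝ k) := by
  rw [← Relation.comp_assoc, slide, Relation.comp_assoc]

/-- denesting: `(x ∪ y)* = x* (y x*)*` -/
theorem denest (x y : α → α → Prop) :
    ReflTransGen (ror x y) =
      ReflTransGen x ⬝ ReflTransGen (y ⬝ ReflTransGen x) := by
  funext a b; apply propext
  constructor
  · intro h
    induction h with
    | refl => exact ⟨a, ReflTransGen.refl, ReflTransGen.refl⟩
    | @tail c b hst hxy ih =>
      obtain ⟨m, hx, hyx⟩ := ih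
      rcases hxy with hx2 | hy2
      · rcases hyx.cases_tail with rfl | ⟨c', hst', hlast⟩
        · exact ⟨b, hx.tail hx2, ReflTransGen.refl⟩
        · obtain ⟨u, hyu, hxu⟩ := hlast
          exact ⟨m, hx, hst'.tail ⟨u, hyu, hxu.tail hx2⟩⟩
      · exact ⟨m, hx, hyx.tail ⟨b, hy2, ReflTransGen.refl⟩⟩
  · rintro ⟨m, hx, hyx⟩
    have h1 : ReflTransGen (ror x y) a m := ReflTransGen.mono (fun a b h => Or.inl h) _ _ hx
    refine h1.trans ?_
    induction hyx with
    | refl => exact ReflTransGen.refl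
    | tail hst hstep ih =>
      obtain ⟨u, hy, hxst⟩ := hstep
      exact (ih.tail (Or.inr hy)).trans (ReflTransGen.mono (fun a b h => Or.inl h) _ _ hxst)

theorem denest' (x y : α → α → Prop) (k : α → γ → Prop) :
    ReflTransGen (ror x y) ⬝ k =
      ReflTransGen x ⬝ (ReflTransGen (y ⬝ ReflTransGen x) ⬝ k) := by
  rw [denest, Relation.comp_assoc]

/-- tail unfolding of star, composed with k : `x* k = k ∪ x* x k` -/
theorem star_unfold (x : α → α → Prop) (k : α → γ → Prop) :
    ReflTransGen x ⬝ k = ror k (ReflTransGen x ⬝ (x ⬝ k)) := by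
  funext a c; apply propext
  constructor
  · rintro ⟨m, hst, hk⟩
    rcases hst.cases_tail with rfl | ⟨c', hst', hlast⟩
    · exact Or.inl hk
    · exact Or.inr ⟨c', hst', m, hlast, hk⟩
  · rintro (h | ⟨m, hst, u, hx, hk⟩)
    · exact ⟨a, ReflTransGen.refl, h⟩
    · exact ⟨u, hst.tail hx, hk⟩


theorem aux1 (w r s : β → β → Prop) :
    w ⬝ ReflTransGen (r ⬝ s) = ror w (w ⬝ (r ⬝ (ReflTransGen (s ⬝ r) ⬝ s))) := by
  rw [star_unfold0 (r ⬝ s), comp_ror, comp_eqRel, ← slide' r s s]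

theorem key (w r s : β → β → Prop) :
    ror s (ReflTransGen (w ⬝ (r ⬝ (ReflTransGen (s ⬝ r)))) ⬝ (w ⬝ (ReflTransGen (r ⬝ s)))) =
      ReflTransGen (w ⬝ (r ⬝ (ReflTransGen (s ⬝ r)))) ⬝ (ror s w) := by
  rw [aux1 w r s, comp_ror, comp_ror, star_unfold (w ⬝ (r ⬝ (ReflTransGen (s ⬝ r)))) s]
  rw [show (w ⬝ (r ⬝ (ReflTransGen (s ⬝ r)))) ⬝ s = w ⬝ (r ⬝ (ReflTransGen (s ⬝ r) ⬝ s)) from by simp only [Relation.comp_assoc]]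
  exact ror_rot _ _ _

theorem key' {α' : Type*} (w r s : β → β → Prop) (b : β → α' → Prop) :
    ror (s ⬝ b) (ReflTransGen (w ⬝ (r ⬝ (ReflTransGen (s ⬝ r)))) ⬝ (w ⬝ (ReflTransGen (r ⬝ s) ⬝ b))) =
      ReflTransGen (w ⬝ (r ⬝ (ReflTransGen (s ⬝ r)))) ⬝ (ror (s ⬝ b) (w ⬝ b)) := by
  have h := congrArg (fun X => X ⬝ b) (key w r s)
  simpa only [ror_comp, Relation.comp_assoc] using h

theorem coreAD {A B C D : Type*} (a : A → B → Prop) (r s : B → B → Prop)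
    (c : B → C → Prop) (d : C → B → Prop) (e t : C → C → Prop) (u : C → D → Prop) :
    (a ⬝ (ReflTransGen (s ⬝ r) ⬝ c)) ⬝ (ReflTransGen (t ⬝ (ror e (d ⬝ (r ⬝ (ReflTransGen (s ⬝ r) ⬝ c))))) ⬝ u) = a ⬝ (ReflTransGen ((ror s (c ⬝ (t ⬝ (ReflTransGen (e ⬝ t) ⬝ d)))) ⬝ r) ⬝ (c ⬝ (ReflTransGen (t ⬝ e) ⬝ u))) := by
  simp only [Relation.comp_assoc]
  rw [comp_ror t e (d ⬝ (r ⬝ (ReflTransGen (s ⬝ r) ⬝ c)))]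
  rw [denest' (t ⬝ e) (t ⬝ (d ⬝ (r ⬝ (ReflTransGen (s ⬝ r) ⬝ c)))) u]
  rw [show (t ⬝ (d ⬝ (r ⬝ (ReflTransGen (s ⬝ r) ⬝ c)))) ⬝ ReflTransGen (t ⬝ e) = (t ⬝ (d ⬝ (r ⬝ (ReflTransGen (s ⬝ r))))) ⬝ (c ⬝ (ReflTransGen (t ⬝ e))) from by simp only [Relation.comp_assoc]]
  rw [← Relation.comp_assoc (r := c) (p := ReflTransGen (t ⬝ e))]
  rw [slide' (c ⬝ (ReflTransGen (t ⬝ e))) (t ⬝ (d ⬝ (r ⬝ (ReflTransGen (s ⬝ r))))) u]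
  rw [ror_comp s (c ⬝ (t ⬝ (ReflTransGen (e ⬝ t) ⬝ d))) r]
  rw [denest' (s ⬝ r) ((c ⬝ (t ⬝ (ReflTransGen (e ⬝ t) ⬝ d))) ⬝ r) (c ⬝ (ReflTransGen (t ⬝ e) ⬝ u))]
  rw [show ((c ⬝ (t ⬝ (ReflTransGen (e ⬝ t) ⬝ d))) ⬝ r) ⬝ ReflTransGen (s ⬝ r) = (c ⬝ (t ⬝ (ReflTransGen (e ⬝ t) ⬝ (d ⬝ (r ⬝ (ReflTransGen (s ⬝ r))))))) from by simp only [Relation.comp_assoc]]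
  rw [show (c ⬝ (ReflTransGen (t ⬝ e))) ⬝ (t ⬝ (d ⬝ (r ⬝ (ReflTransGen (s ⬝ r))))) = (c ⬝ (ReflTransGen (t ⬝ e) ⬝ (t ⬝ (d ⬝ (r ⬝ (ReflTransGen (s ⬝ r))))))) from Relation.comp_assoc]
  rw [show (c ⬝ (ReflTransGen (t ⬝ e))) ⬝ u = (c ⬝ (ReflTransGen (t ⬝ e) ⬝ u)) from Relation.comp_assoc]
  rw [show ReflTransGen (t ⬝ e) ⬝ (t ⬝ (d ⬝ (r ⬝ (ReflTransGen (s ⬝ r))))) = t ⬝ (ReflTransGen (e ⬝ t) ⬝ (d ⬝ (r ⬝ (ReflTransGen (s ⬝ r))))) from (slide' t e (d ⬝ (r ⬝ (ReflTransGen (s ⬝ r))))).symm]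

theorem coreAA {A B C : Type*} (a : A → B → Prop) (b : B → A → Prop) (r s : B → B → Prop)
    (c : B → C → Prop) (d : C → B → Prop) (e t : C → C → Prop) :
    ror (a ⬝ (s ⬝ (ReflTransGen (r ⬝ s) ⬝ b))) ((a ⬝ (ReflTransGen (s ⬝ r) ⬝ c)) ⬝ (t ⬝ (ReflTransGen ((ror e (d ⬝ (r ⬝ (ReflTransGen (s ⬝ r) ⬝ c)))) ⬝ t) ⬝ (d ⬝ (ReflTransGen (r ⬝ s) ⬝ b))))) = a ⬝ ((ror s (c ⬝ (t ⬝ (ReflTransGen (e ⬝ t) ⬝ d)))) ⬝ (ReflTransGen (r ⬝ (ror s (c ⬝ (t ⬝ (ReflTransGen (e ⬝ t) ⬝ d))))) ⬝ b)) := by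
  simp only [Relation.comp_assoc]
  rw [slide' s r b]
  rw [ror_comp e (d ⬝ (r ⬝ (ReflTransGen (s ⬝ r) ⬝ c))) t]
  rw [denest' (e ⬝ t) ((d ⬝ (r ⬝ (ReflTransGen (s ⬝ r) ⬝ c))) ⬝ t) (d ⬝ (ReflTransGen (r ⬝ s) ⬝ b))]
  rw [show ((d ⬝ (r ⬝ (ReflTransGen (s ⬝ r) ⬝ c))) ⬝ t) ⬝ ReflTransGen (e ⬝ t) = (d ⬝ (r ⬝ (ReflTransGen (s ⬝ r)))) ⬝ (c ⬝ (t ⬝ (ReflTransGen (e ⬝ t)))) from by simp only [Relation.comp_assoc]]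
  rw [show c ⬝ (t ⬝ (ReflTransGen (e ⬝ t) ⬝ (ReflTransGen ((d ⬝ (r ⬝ (ReflTransGen (s ⬝ r)))) ⬝ (c ⬝ (t ⬝ (ReflTransGen (e ⬝ t))))) ⬝ (d ⬝ (ReflTransGen (r ⬝ s) ⬝ b))))) = (c ⬝ (t ⬝ (ReflTransGen (e ⬝ t)))) ⬝ (ReflTransGen ((d ⬝ (r ⬝ (ReflTransGen (s ⬝ r)))) ⬝ (c ⬝ (t ⬝ (ReflTransGen (e ⬝ t))))) ⬝ (d ⬝ (ReflTransGen (r ⬝ s) ⬝ b))) from by simp only [Relation.comp_assoc]]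
  rw [slide' (c ⬝ (t ⬝ (ReflTransGen (e ⬝ t)))) (d ⬝ (r ⬝ (ReflTransGen (s ⬝ r)))) (d ⬝ (ReflTransGen (r ⬝ s) ⬝ b))]
  rw [slide' (ror s (c ⬝ (t ⬝ (ReflTransGen (e ⬝ t) ⬝ d)))) r b]
  rw [ror_comp s (c ⬝ (t ⬝ (ReflTransGen (e ⬝ t) ⬝ d))) r]
  rw [ror_comp s (c ⬝ (t ⬝ (ReflTransGen (e ⬝ t) ⬝ d))) b]
  rw [denest' (s ⬝ r) ((c ⬝ (t ⬝ (ReflTransGen (e ⬝ t) ⬝ d))) ⬝ r) (ror (s ⬝ b) ((c ⬝ (t ⬝ (ReflTransGen (e ⬝ t) ⬝ d))) ⬝ b))]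
  rw [show (c ⬝ (t ⬝ (ReflTransGen (e ⬝ t)))) ⬝ (d ⬝ (r ⬝ (ReflTransGen (s ⬝ r)))) = (c ⬝ (t ⬝ (ReflTransGen (e ⬝ t) ⬝ d))) ⬝ (r ⬝ (ReflTransGen (s ⬝ r))) from by simp only [Relation.comp_assoc]]
  rw [show (c ⬝ (t ⬝ (ReflTransGen (e ⬝ t)))) ⬝ (d ⬝ (ReflTransGen (r ⬝ s) ⬝ b)) = (c ⬝ (t ⬝ (ReflTransGen (e ⬝ t) ⬝ d))) ⬝ (ReflTransGen (r ⬝ s) ⬝ b) from by simp only [Relation.comp_assoc]]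
  rw [show ((c ⬝ (t ⬝ (ReflTransGen (e ⬝ t) ⬝ d))) ⬝ r) ⬝ ReflTransGen (s ⬝ r) = (c ⬝ (t ⬝ (ReflTransGen (e ⬝ t) ⬝ d))) ⬝ (r ⬝ (ReflTransGen (s ⬝ r))) from Relation.comp_assoc]
  rw [← comp_ror a (ReflTransGen (s ⬝ r) ⬝ (s ⬝ b)) (ReflTransGen (s ⬝ r) ⬝ (ReflTransGen ((c ⬝ (t ⬝ (ReflTransGen (e ⬝ t) ⬝ d))) ⬝ (r ⬝ (ReflTransGen (s ⬝ r)))) ⬝ ((c ⬝ (t ⬝ (ReflTransGen (e ⬝ t) ⬝ d))) ⬝ (ReflTransGen (r ⬝ s) ⬝ b))))]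
  rw [← comp_ror (ReflTransGen (s ⬝ r)) (s ⬝ b) (ReflTransGen ((c ⬝ (t ⬝ (ReflTransGen (e ⬝ t) ⬝ d))) ⬝ (r ⬝ (ReflTransGen (s ⬝ r)))) ⬝ ((c ⬝ (t ⬝ (ReflTransGen (e ⬝ t) ⬝ d))) ⬝ (ReflTransGen (r ⬝ s) ⬝ b)))]
  rw [key' (c ⬝ (t ⬝ (ReflTransGen (e ⬝ t) ⬝ d))) r s b]

theorem execR_assoc {A B C D : Type*} (R : A ⊕ B → A ⊕ B → Prop)
    (S : B ⊕ C → B ⊕ C → Prop) (T : C ⊕ D → C ⊕ D → Prop) :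
    ExecR (ExecR R S) T = ExecR R (ExecR S T) := by
  funext x y
  cases x with
  | inl i =>
    cases y with
    | inl j =>
      have h := iff_of_eq (congrFun (congrFun (coreAA (fun i j => R (Sum.inl i) (Sum.inr j)) (fun i j => R (Sum.inr i) (Sum.inl j)) (fun i j => R (Sum.inr i) (Sum.inr j)) (fun i j => S (Sum.inl i) (Sum.inl j)) (fun i j => S (Sum.inl i) (Sum.inr j)) (fun i j => S (Sum.inr i) (Sum.inl j)) (fun i j => S (Sum.inr i) (Sum.inr j)) (fun i j => T (Sum.inl i) (Sum.inl j))) i) j)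
      exact propext (or_assoc.trans (or_congr_right h))
    | inr j =>
      exact congrFun (congrFun (coreAD (fun i j => R (Sum.inl i) (Sum.inr j)) (fun i j => R (Sum.inr i) (Sum.inr j)) (fun i j => S (Sum.inl i) (Sum.inl j)) (fun i j => S (Sum.inl i) (Sum.inr j)) (fun i j => S (Sum.inr i) (Sum.inl j)) (fun i j => S (Sum.inr i) (Sum.inr j)) (fun i j => T (Sum.inl i) (Sum.inl j)) (fun i j => T (Sum.inl i) (Sum.inr j))) i) j
  | inr i =>
    cases y with
    | inl j =>
      exact (congrFun (congrFun (coreAD (fun i j => T (Sum.inr i) (Sum.inl j)) (fun i j => T (Sum.inl i) (Sum.inl j)) (fun i j => S (Sum.inr i) (Sum.inr j)) (fun i j => S (Sum.inr i) (Sum.inl j)) (fun i j => S (Sum.inl i) (Sum.inr j)) (fun i j => S (Sum.inl i) (Sum.inl j)) (fun i j => R (Sum.inr i) (Sum.inr j)) (fun i j => R (Sum.inr i) (Sum.inl j))) i) j).symm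
    | inr j =>
      have h := iff_of_eq (congrFun (congrFun (coreAA (fun i j => T (Sum.inr i) (Sum.inl j)) (fun i j => T (Sum.inl i) (Sum.inr j)) (fun i j => T (Sum.inl i) (Sum.inl j)) (fun i j => S (Sum.inr i) (Sum.inr j)) (fun i j => S (Sum.inr i) (Sum.inl j)) (fun i j => S (Sum.inl i) (Sum.inr j)) (fun i j => S (Sum.inl i) (Sum.inl j)) (fun i j => R (Sum.inr i) (Sum.inr j))) i) j)
      exact propext ((or_congr_right h.symm).trans or_assoc.symm)

section Machine
variable {A B C : Type*} (f : A ⊕ B → A ⊕ B) (g : B ⊕ C → B ⊕ C)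

/-- one step of the token machine: state `inl (inl b)` means "at left copy of `b`,
apply `g` next"; `inl (inr b)` means "apply `f` next"; `inr e` is an exit. -/
def mstep : (B ⊕ B) ⊕ (A ⊕ C) → (B ⊕ B) ⊕ (A ⊕ C)
  | .inl (.inl b) => match g (.inl b) with
      | .inl b' => .inl (.inr b')
      | .inr c => .inr (.inr c)
  | .inl (.inr b) => match f (.inr b) with
      | .inr b' => .inl (.inl b')
      | .inl a => .inr (.inl a)
  | .inr e => .inr e

def minit : A ⊕ C → (B ⊕ B) ⊕ (A ⊕ C)
  | .inl i => match f (.inl i) with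
      | .inl j => .inr (.inl j)
      | .inr b => .inl (.inl b)
  | .inr c => match g (.inr c) with
      | .inr c' => .inr (.inr c')
      | .inl b => .inl (.inr b)

def Run (x y : A ⊕ C) : Prop := ∃ k, (mstep f g)^[k] (minit f g x) = .inr y

theorem mstep_fixed (k : ℕ) (e : A ⊕ C) : (mstep f g)^[k] (Sum.inr e) = Sum.inr e :=
  Function.iterate_fixed rfl k

theorem run_absorb {k k' : ℕ} {z} {y : A ⊕ C} (h : (mstep f g)^[k] z = .inr y)
    (hle : k ≤ k') : (mstep f g)^[k'] z = .inr y := by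
  have : (mstep f g)^[k' - k + k] z = .inr y := by
    rw [Function.iterate_add_apply, h, mstep_fixed]
  rwa [Nat.sub_add_cancel hle] at this

theorem run_unique {x y y'} (h : Run f g x y) (h' : Run f g x y') : y = y' := by
  obtain ⟨k, hk⟩ := h; obtain ⟨k', hk'⟩ := h'
  rcases le_total k k' with hle | hle
  · have h2 := run_absorb f g hk hle; exact Sum.inr.inj (h2.symm.trans hk')
  · have h2 := run_absorb f g hk' hle; exact (Sum.inr.inj (h2.symm.trans hk)).symm

variable {f g}

theorem mstep_inj (hf : Function.Injective f) (hg : Function.Injective g)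
    {s s' : B ⊕ B} (h : mstep f g (Sum.inl s) = mstep f g (Sum.inl s')) : s = s' := by
  cases s with
  | inl b =>
    cases s' with
    | inl b' =>
      rcases hb : g (.inl b) with b1 | c1 <;> rcases hb' : g (.inl b') with b2 | c2 <;>
          simp only [mstep, hb, hb'] at h
      · obtain rfl : b1 = b2 := by simpa using h
        have hbb : b = b' := by simpa using hg (hb.trans hb'.symm)
        rw [hbb]
      · exact absurd h (by simp)
      · exact absurd h (by simp)
      · obtain rfl : c1 = c2 := by simpa using h
        have hbb : b = b' := by simpa using hg (hb.trans hb'.symm)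
        rw [hbb]
    | inr b' =>
      rcases hb : g (.inl b) with b1 | c1 <;> rcases hb' : f (.inr b') with a2 | b2 <;>
          simp only [mstep, hb, hb'] at h <;> exact absurd h (by simp)
  | inr b =>
    cases s' with
    | inl b' =>
      rcases hb : f (.inr b) with a1 | b1 <;> rcases hb' : g (.inl b') with b2 | c2 <;>
          simp only [mstep, hb, hb'] at h <;> exact absurd h (by simp)
    | inr b' =>
      rcases hb : f (.inr b) with a1 | b1 <;> rcases hb' : f (.inr b') with a2 | b2 <;>
          simp only [mstep, hb, hb'] at h
      · obtain rfl : a1 = a2 := by simpa using h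
        have hbb : b = b' := by simpa using hf (hb.trans hb'.symm)
        rw [hbb]
      · exact absurd h (by simp)
      · exact absurd h (by simp)
      · obtain rfl : b1 = b2 := by simpa using h
        have hbb : b = b' := by simpa using hf (hb.trans hb'.symm)
        rw [hbb]

theorem no_pred (hf : Function.Injective f) (hg : Function.Injective g)
    {x : A ⊕ C} {s0 : B ⊕ B} (hx : minit f g x = Sum.inl s0) (s : B ⊕ B) :
    mstep f g (Sum.inl s) ≠ Sum.inl s0 := by
  intro hs
  cases x with
  | inl i =>
    rcases hi : f (.inl i) with j | b0 <;> simp only [minit, hi] at hx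
    · exact absurd hx (by simp)
    · -- s0 = inl b0
      cases s with
      | inl b =>
        rcases hb : g (.inl b) with b1 | c1 <;> simp only [mstep, hb] at hs <;>
          rw [← hx] at hs <;> exact absurd hs (by simp)
      | inr b =>
        rcases hb : f (.inr b) with a1 | b1 <;> simp only [mstep, hb] at hs <;>
          rw [← hx] at hs
        · exact absurd hs (by simp)
        · obtain rfl : b1 = b0 := by simpa using hs
          exact absurd (hf (hb.trans hi.symm)) (by simp)
  | inr c =>
    rcases hc : g (.inr c) with b0 | c' <;> simp only [minit, hc] at hx
    · cases s with
      | inl b =>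
        rcases hb : g (.inl b) with b1 | c1 <;> simp only [mstep, hb] at hs <;>
          rw [← hx] at hs
        · obtain rfl : b1 = b0 := by simpa using hs
          exact absurd (hg (hb.trans hc.symm)) (by simp)
        · exact absurd hs (by simp)
      | inr b =>
        rcases hb : f (.inr b) with a1 | b1 <;> simp only [mstep, hb] at hs <;>
          rw [← hx] at hs
        · exact absurd hs (by simp)
        · exact absurd hs (by simp)
    · exact absurd hx (by simp)

theorem run_total [Finite B] (hf : Function.Injective f) (hg : Function.Injective g)
    (x : A ⊕ C) : ∃ y, Run f g x y := by
  by_contra hno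
  push_neg at hno
  have hleft : ∀ k, ∃ s : B ⊕ B, (mstep f g)^[k] (minit f g x) = Sum.inl s := by
    intro k
    rcases hk : (mstep f g)^[k] (minit f g x) with s | y
    · exact ⟨s, rfl⟩
    · exact absurd ⟨k, hk⟩ (hno y)
  choose ψ hψ using hleft
  have hstep : ∀ k, mstep f g (Sum.inl (ψ k)) = Sum.inl (ψ (k + 1)) := by
    intro k
    rw [← hψ k, ← Function.iterate_succ_apply' (mstep f g) k, hψ (k + 1)]
  have key : ∀ i j, i < j → ψ i = ψ j → False := by
    intro i j hlt heq
    have desc : ∀ d, d ≤ i → ψ (i - d) = ψ (j - d) := by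
      intro d
      induction d with
      | zero => intro _; simpa using heq
      | succ d ih =>
        intro hdi
        have hd := ih (Nat.le_of_succ_le hdi)
        have h1 : i - d = (i - (d + 1)) + 1 := by omega
        have h2 : j - d = (j - (d + 1)) + 1 := by omega
        rw [h1, h2] at hd
        exact mstep_inj hf hg
          ((hstep (i - (d + 1))).trans ((congrArg Sum.inl hd).trans (hstep (j - (d + 1))).symm))
    have h0 : ψ 0 = ψ (j - i) := by simpa using desc i le_rfl
    have hj : j - i - 1 + 1 = j - i := by omega
    have hlast : mstep f g (Sum.inl (ψ (j - i - 1))) = Sum.inl (ψ 0) := by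
      rw [hstep (j - i - 1), hj, ← h0]
    have hinit : minit f g x = Sum.inl (ψ 0) := by simpa using hψ 0
    exact no_pred hf hg hinit _ hlast
  obtain ⟨i, j, hne, hij⟩ := Finite.exists_ne_map_eq_of_infinite ψ
  rcases lt_or_gt_of_ne hne with h | h
  · exact key i j h hij
  · exact key j i h hij.symm

variable (f g)

def csbb : B → B → Prop := fun b b' => g (Sum.inl b) = Sum.inl b'
def csbc : B → C → Prop := fun b c => g (Sum.inl b) = Sum.inr c
def crbb : B → B → Prop := fun b b' => f (Sum.inr b) = Sum.inr b'
def crba : B → A → Prop := fun b a => f (Sum.inr b) = Sum.inl a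

theorem exit_char : ∀ (k : ℕ) (s : B ⊕ B) (y : A ⊕ C),
    (mstep f g)^[k] (Sum.inl s) = Sum.inr y →
    (match s, y with
    | .inl b, .inl a =>
        Comp (csbb g) (Comp (ReflTransGen (Comp (crbb f) (csbb g))) (crba f)) b a
    | .inl b, .inr c => Comp (ReflTransGen (Comp (csbb g) (crbb f))) (csbc g) b c
    | .inr b, .inl a => Comp (ReflTransGen (Comp (crbb f) (csbb g))) (crba f) b a
    | .inr b, .inr c =>
        Comp (crbb f) (Comp (ReflTransGen (Comp (csbb g) (crbb f))) (csbc g)) b c) := by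
  intro k
  induction k with
  | zero => intro s y h; simp at h
  | succ k ih =>
    intro s y h
    rw [Function.iterate_succ_apply] at h
    cases s with
    | inl b =>
      rcases hb : g (Sum.inl b) with b1 | c1
      · have h' : (mstep f g)^[k] (Sum.inl (Sum.inr b1)) = Sum.inr y := by
          simpa only [mstep, hb] using h
        have ihr := ih (Sum.inr b1) y h'
        cases y with
        | inl a => exact ⟨b1, hb, ihr⟩
        | inr c =>
          obtain ⟨b2, hr, m, hst, he⟩ := ihr
          exact ⟨m, ReflTransGen.head ⟨b1, hb, hr⟩ hst, he⟩
      · have h' : (mstep f g)^[k] (Sum.inr (Sum.inr c1) : (B ⊕ B) ⊕ (A ⊕ C)) = Sum.inr y := by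
          simpa only [mstep, hb] using h
        rw [mstep_fixed] at h'
        obtain rfl : Sum.inr c1 = y := Sum.inr.inj h'
        exact ⟨b, ReflTransGen.refl, hb⟩
    | inr b =>
      rcases hb : f (Sum.inr b) with a1 | b1
      · have h' : (mstep f g)^[k] (Sum.inr (Sum.inl a1) : (B ⊕ B) ⊕ (A ⊕ C)) = Sum.inr y := by
          simpa only [mstep, hb] using h
        rw [mstep_fixed] at h'
        obtain rfl : Sum.inl a1 = y := Sum.inr.inj h'
        exact ⟨b, ReflTransGen.refl, hb⟩
      · have h' : (mstep f g)^[k] (Sum.inl (Sum.inl b1)) = Sum.inr y := by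
          simpa only [mstep, hb] using h
        have ihr := ih (Sum.inl b1) y h'
        cases y with
        | inl a =>
          obtain ⟨b2, hs, m, hst, he⟩ := ihr
          exact ⟨m, ReflTransGen.head ⟨b1, hb, hs⟩ hst, he⟩
        | inr c => exact ⟨b1, hb, ihr⟩

theorem reach_F2 {b b' : B} (h : ReflTransGen (Comp (crbb f) (csbb g)) b b') :
    ∃ k, (mstep f g)^[k] (Sum.inl (Sum.inr b)) = Sum.inl (Sum.inr b') := by
  induction h using ReflTransGen.head_induction_on with
  | refl => exact ⟨0, rfl⟩
  | head hstep _ ih =>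
    obtain ⟨u, hr, hs⟩ := hstep
    replace hr : f (Sum.inr _) = Sum.inr u := hr
    replace hs : g (Sum.inl u) = Sum.inl _ := hs
    obtain ⟨k, hk⟩ := ih
    refine ⟨k + 1 + 1, ?_⟩
    rw [Function.iterate_add_apply, Function.iterate_add_apply]
    simp only [Function.iterate_one, mstep, hr, hs]
    exact hk

theorem reach_F1 {b b' : B} (h : ReflTransGen (Comp (csbb g) (crbb f)) b b') :
    ∃ k, (mstep f g)^[k] (Sum.inl (Sum.inl b)) = Sum.inl (Sum.inl b') := by
  induction h using ReflTransGen.head_induction_on with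
  | refl => exact ⟨0, rfl⟩
  | head hstep _ ih =>
    obtain ⟨u, hs, hr⟩ := hstep
    replace hs : g (Sum.inl _) = Sum.inl u := hs
    replace hr : f (Sum.inr u) = Sum.inr _ := hr
    obtain ⟨k, hk⟩ := ih
    refine ⟨k + 1 + 1, ?_⟩
    rw [Function.iterate_add_apply, Function.iterate_add_apply]
    simp only [Function.iterate_one, mstep, hs, hr]
    exact hk

end Machine

section ExecIff
variable {A B C : Type*} (R : A ⊕ B → A ⊕ B → Prop) (S : B ⊕ C → B ⊕ C → Prop)

theorem execR_ll (i j : A) : ExecR R S (Sum.inl i) (Sum.inl j) ↔ (R (Sum.inl i) (Sum.inl j) ∨ Comp (fun i j => R (Sum.inl i) (Sum.inr j)) (Comp (fun i j => S (Sum.inl i) (Sum.inl j)) (Comp (ReflTransGen (Comp (fun i j => R (Sum.inr i) (Sum.inr j)) (fun i j => S (Sum.inl i) (Sum.inl j)))) (fun i j => R (Sum.inr i) (Sum.inl j)))) i j) := Iff.rfl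
theorem execR_lr (i : A) (j : C) : ExecR R S (Sum.inl i) (Sum.inr j) ↔ (Comp (fun i j => R (Sum.inl i) (Sum.inr j)) (Comp (ReflTransGen (Comp (fun i j => S (Sum.inl i) (Sum.inl j)) (fun i j => R (Sum.inr i) (Sum.inr j)))) (fun i j => S (Sum.inl i) (Sum.inr j))) i j) := Iff.rfl
theorem execR_rl (i : C) (j : A) : ExecR R S (Sum.inr i) (Sum.inl j) ↔ (Comp (fun i j => S (Sum.inr i) (Sum.inl j)) (Comp (ReflTransGen (Comp (fun i j => R (Sum.inr i) (Sum.inr j)) (fun i j => S (Sum.inl i) (Sum.inl j)))) (fun i j => R (Sum.inr i) (Sum.inl j))) i j) := Iff.rfl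
theorem execR_rr (i j : C) : ExecR R S (Sum.inr i) (Sum.inr j) ↔ (S (Sum.inr i) (Sum.inr j) ∨ Comp (fun i j => S (Sum.inr i) (Sum.inl j)) (Comp (fun i j => R (Sum.inr i) (Sum.inr j)) (Comp (ReflTransGen (Comp (fun i j => S (Sum.inl i) (Sum.inl j)) (fun i j => R (Sum.inr i) (Sum.inr j)))) (fun i j => S (Sum.inl i) (Sum.inr j)))) i j) := Iff.rfl

end ExecIff

section Machine2
variable {A B C : Type*} (f : A ⊕ B → A ⊕ B) (g : B ⊕ C → B ⊕ C)

theorem exec_iff_run (x y : A ⊕ C) :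
    ExecR (graphRel f) (graphRel g) x y ↔ Run f g x y := by
  constructor
  · intro h
    cases x with
    | inl i =>
      cases y with
      | inl j =>
        rcases (execR_ll (graphRel f) (graphRel g) i j).mp h with haa | ⟨b0, hab, b1, hs, m, hst, hba⟩
        · replace haa : f (Sum.inl i) = Sum.inl j := haa
          exact ⟨0, by simp [minit, haa]⟩
        · replace hab : f (Sum.inl i) = Sum.inr b0 := hab
          replace hs : g (Sum.inl b0) = Sum.inl b1 := hs
          replace hba : f (Sum.inr m) = Sum.inl j := hba
          obtain ⟨k, hk⟩ := reach_F2 f g hst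
          refine ⟨1 + k + 1, ?_⟩
          rw [Function.iterate_add_apply, Function.iterate_add_apply]
          simp only [Function.iterate_one, minit, hab, mstep, hs]
          rw [hk]
          simp [mstep, hba]
      | inr c =>
        obtain ⟨b0, hab, m, hst, hbc⟩ := (execR_lr (graphRel f) (graphRel g) i c).mp h
        replace hab : f (Sum.inl i) = Sum.inr b0 := hab
        replace hbc : g (Sum.inl m) = Sum.inr c := hbc
        obtain ⟨k, hk⟩ := reach_F1 f g hst
        refine ⟨k + 1, ?_⟩
        rw [show minit f g (Sum.inl i) = Sum.inl (Sum.inl b0) from by simp [minit, hab],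
          Function.iterate_succ_apply', hk]
        simp [mstep, hbc]
    | inr c =>
      cases y with
      | inl j =>
        obtain ⟨b0, hcb, m, hst, hba⟩ := (execR_rl (graphRel f) (graphRel g) c j).mp h
        replace hcb : g (Sum.inr c) = Sum.inl b0 := hcb
        replace hba : f (Sum.inr m) = Sum.inl j := hba
        obtain ⟨k, hk⟩ := reach_F2 f g hst
        refine ⟨k + 1, ?_⟩
        rw [show minit f g (Sum.inr c) = Sum.inl (Sum.inr b0) from by simp [minit, hcb],
          Function.iterate_succ_apply', hk]
        simp [mstep, hba]
      | inr c' =>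
        rcases (execR_rr (graphRel f) (graphRel g) c c').mp h with hcc | ⟨b0, hcb, b1, hr, m, hst, hbc⟩
        · replace hcc : g (Sum.inr c) = Sum.inr c' := hcc
          exact ⟨0, by simp [minit, hcc]⟩
        · replace hcb : g (Sum.inr c) = Sum.inl b0 := hcb
          replace hr : f (Sum.inr b0) = Sum.inr b1 := hr
          replace hbc : g (Sum.inl m) = Sum.inr c' := hbc
          obtain ⟨k, hk⟩ := reach_F1 f g hst
          refine ⟨1 + k + 1, ?_⟩
          rw [Function.iterate_add_apply, Function.iterate_add_apply]
          simp only [Function.iterate_one, minit, hcb, mstep, hr]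
          rw [hk]
          simp [mstep, hbc]
  · rintro ⟨k, hk⟩
    cases x with
    | inl i =>
      rcases hi : f (Sum.inl i) with j0 | b0
      · rw [show minit f g (Sum.inl i) = Sum.inr (Sum.inl j0) from by simp [minit, hi],
          mstep_fixed] at hk
        obtain rfl : Sum.inl j0 = y := Sum.inr.inj hk
        exact (execR_ll (graphRel f) (graphRel g) i j0).mpr (Or.inl hi)
      · rw [show minit f g (Sum.inl i) = Sum.inl (Sum.inl b0) from by simp [minit, hi]] at hk
        have hchar := exit_char f g k (Sum.inl b0) y hk
        cases y with
        | inl a =>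
          obtain ⟨b1, hs, m, hst, he⟩ := hchar
          exact (execR_ll (graphRel f) (graphRel g) i a).mpr (Or.inr ⟨b0, hi, b1, hs, m, hst, he⟩)
        | inr c =>
          obtain ⟨m, hst, he⟩ := hchar
          exact (execR_lr (graphRel f) (graphRel g) i c).mpr ⟨b0, hi, m, hst, he⟩
    | inr c =>
      rcases hc : g (Sum.inr c) with b0 | c0
      · rw [show minit f g (Sum.inr c) = Sum.inl (Sum.inr b0) from by simp [minit, hc]] at hk
        have hchar := exit_char f g k (Sum.inr b0) y hk
        cases y with
        | inl a =>
          obtain ⟨m, hst, he⟩ := hchar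
          exact (execR_rl (graphRel f) (graphRel g) c a).mpr ⟨b0, hc, m, hst, he⟩
        | inr c' =>
          obtain ⟨b1, hr, m, hst, he⟩ := hchar
          exact (execR_rr (graphRel f) (graphRel g) c c').mpr (Or.inr ⟨b0, hc, b1, hr, m, hst, he⟩)
      · rw [show minit f g (Sum.inr c) = Sum.inr (Sum.inr c0) from by simp [minit, hc],
          mstep_fixed] at hk
        obtain rfl : Sum.inr c0 = y := Sum.inr.inj hk
        exact (execR_rr (graphRel f) (graphRel g) c c0).mpr (Or.inl hc)

end Machine2


theorem star_rev {α : Type*} {p : α → α → Prop} {q : α → α → Prop}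
    (hpq : ∀ x y, p x y → q y x) {a b : α} (h : ReflTransGen p a b) :
    ReflTransGen q b a := by
  induction h with
  | refl => exact ReflTransGen.refl
  | tail _ hstep ih => exact ReflTransGen.head (hpq _ _ hstep) ih

section Symm
variable {A B C : Type*} {R : A ⊕ B → A ⊕ B → Prop} {S : B ⊕ C → B ⊕ C → Prop}

theorem execR_symm (hR : ∀ x y, R x y → R y x) (hS : ∀ x y, S x y → S y x) :
    ∀ x y, ExecR R S x y → ExecR R S y x := by
  intro x y h
  cases x with
  | inl i =>
    cases y with
    | inl j =>
      rcases (execR_ll R S i j).mp h with haa | ⟨b0, hab, b1, hs, m, hst, hba⟩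
      · exact (execR_ll R S j i).mpr (Or.inl (hR _ _ haa))
      · have hst' : ReflTransGen (Comp (fun i j => S (Sum.inl i) (Sum.inl j))
            (fun i j => R (Sum.inr i) (Sum.inr j))) m b1 :=
          star_rev (fun x y ⟨u, h1, h2⟩ => ⟨u, hS _ _ h2, hR _ _ h1⟩) hst
        have hcomp : Relation.Comp (ReflTransGen (Comp (fun i j => S (Sum.inl i) (Sum.inl j))
            (fun i j => R (Sum.inr i) (Sum.inr j)))) (fun i j => S (Sum.inl i) (Sum.inl j)) m b0 :=
          ⟨b1, hst', hS _ _ hs⟩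
        rw [← slide (fun (i : B) (j : B) => S (Sum.inl i) (Sum.inl j))
            (fun (i : B) (j : B) => R (Sum.inr i) (Sum.inr j))] at hcomp
        obtain ⟨u, hu, hust⟩ := hcomp
        exact (execR_ll R S j i).mpr (Or.inr ⟨m, hR _ _ hba, u, hu, b0, hust, hR _ _ hab⟩)
    | inr c =>
      obtain ⟨b0, hab, m, hst, hbc⟩ := (execR_lr R S i c).mp h
      have hst' := star_rev (q := Comp (fun (i : B) (j : B) => R (Sum.inr i) (Sum.inr j))
          (fun i j => S (Sum.inl i) (Sum.inl j)))
          (fun x y ⟨u, h1, h2⟩ => ⟨u, hR _ _ h2, hS _ _ h1⟩) hst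
      exact (execR_rl R S c i).mpr ⟨m, hS _ _ hbc, b0, hst', hR _ _ hab⟩
  | inr c =>
    cases y with
    | inl j =>
      obtain ⟨b0, hcb, m, hst, hba⟩ := (execR_rl R S c j).mp h
      have hst' := star_rev (q := Comp (fun (i : B) (j : B) => S (Sum.inl i) (Sum.inl j))
          (fun i j => R (Sum.inr i) (Sum.inr j)))
          (fun x y ⟨u, h1, h2⟩ => ⟨u, hS _ _ h2, hR _ _ h1⟩) hst
      exact (execR_lr R S j c).mpr ⟨m, hR _ _ hba, b0, hst', hS _ _ hcb⟩
    | inr c' =>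
      rcases (execR_rr R S c c').mp h with hcc | ⟨b0, hcb, b1, hr, m, hst, hbc⟩
      · exact (execR_rr R S c' c).mpr (Or.inl (hS _ _ hcc))
      · have hst' := star_rev (q := Comp (fun (i : B) (j : B) => R (Sum.inr i) (Sum.inr j))
            (fun i j => S (Sum.inl i) (Sum.inl j)))
            (fun x y ⟨u, h1, h2⟩ => ⟨u, hR _ _ h2, hS _ _ h1⟩) hst
        have hcomp : Relation.Comp (ReflTransGen (Comp (fun (i : B) (j : B) => R (Sum.inr i) (Sum.inr j))
            (fun i j => S (Sum.inl i) (Sum.inl j)))) (fun i j => R (Sum.inr i) (Sum.inr j)) m b0 :=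
          ⟨b1, hst', hR _ _ hr⟩
        rw [← slide (fun (i : B) (j : B) => R (Sum.inr i) (Sum.inr j))
            (fun (i : B) (j : B) => S (Sum.inl i) (Sum.inl j))] at hcomp
        obtain ⟨u, hu, hust⟩ := hcomp
        exact (execR_rr R S c' c).mpr (Or.inr ⟨m, hS _ _ hbc, u, hu, b0, hust, hS _ _ hcb⟩)

end Symm

section Total
variable {A B C : Type*} [Finite B] {f : A ⊕ B → A ⊕ B} {g : B ⊕ C → B ⊕ C}

theorem exec_total_unique (hf : Function.Injective f) (hg : Function.Injective g)
    (x : A ⊕ C) : ∃! y, ExecR (graphRel f) (graphRel g) x y := by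
  obtain ⟨y, hy⟩ := run_total hf hg x
  exact ⟨y, (exec_iff_run f g x y).mpr hy,
    fun y' hy' => run_unique f g ((exec_iff_run f g x y').mp hy') hy⟩

end Total


section Glue
variable {n m p : ℕ}

theorem graph_execFun {f : Fin n ⊕ Fin m → Fin n ⊕ Fin m}
    {g : Fin m ⊕ Fin p → Fin m ⊕ Fin p} (hf : Function.Injective f)
    (hg : Function.Injective g) :
    graphRel (execFun f g) = ExecR (graphRel f) (graphRel g) := by
  funext x y
  obtain ⟨y0, hy0, huniq⟩ := exec_total_unique hf hg x
  have hex : ∃ z, ExecR (graphRel f) (graphRel g) x z := ⟨y0, hy0⟩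
  have hval : execFun f g x = hex.choose := by
    unfold execFun
    exact dif_pos hex
  apply propext
  constructor
  · intro hxy
    replace hxy : execFun f g x = y := hxy
    rw [← hxy, hval]
    exact hex.choose_spec
  · intro hxy
    show execFun f g x = y
    rw [hval]
    exact (huniq _ hex.choose_spec).trans (huniq _ hxy).symm

theorem execFun_involutive {f : Fin n ⊕ Fin m → Fin n ⊕ Fin m}
    {g : Fin m ⊕ Fin p → Fin m ⊕ Fin p} (hf : Function.Involutive f)
    (hg : Function.Involutive g) :
    Function.Involutive (execFun f g) := by
  have hG := graph_execFun hf.injective hg.injective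
  intro x
  have h1 : ExecR (graphRel f) (graphRel g) x (execFun f g x) := by
    rw [← hG]; exact rfl
  have h2 := execR_symm (R := graphRel f) (S := graphRel g)
    (fun x y h => h ▸ hf x) (fun x y h => h ▸ hg x) _ _ h1
  obtain ⟨y0, hy0, huniq⟩ := exec_total_unique hf.injective hg.injective (execFun f g x)
  have h3 : ExecR (graphRel f) (graphRel g) (execFun f g x) (execFun f g (execFun f g x)) := by
    rw [← hG]; exact rfl
  exact (huniq _ h3).trans (huniq _ h2).symm

end Glue

end TLAux

/-- The execution-formula composition of planar involutions is associative:
for `f ∈ P(n,m)`, `g ∈ P(m,p)`, `h ∈ P(p,q)`, `(f;g);h = f;(g;h)`. -/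
theorem stmt_8 (n m p q : ℕ) (f : Fin n ⊕ Fin m → Fin n ⊕ Fin m)
    (g : Fin m ⊕ Fin p → Fin m ⊕ Fin p) (h : Fin p ⊕ Fin q → Fin p ⊕ Fin q)
    (hf : Planar f) (hg : Planar g) (hh : Planar h) :
    execFun (execFun f g) h = execFun f (execFun g h) := by
  have hfI : Function.Involutive f := hf.1.1
  have hgI : Function.Involutive g := hg.1.1
  have hhI : Function.Involutive h := hh.1.1
  have hI1 := TLAux.execFun_involutive hfI hgI
  have hI2 := TLAux.execFun_involutive hgI hhI
  have hEq : graphRel (execFun (execFun f g) h) = graphRel (execFun f (execFun g h)) := by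
    rw [TLAux.graph_execFun hI1.injective hhI.injective,
        TLAux.graph_execFun hfI.injective hI2.injective,
        TLAux.graph_execFun hfI.injective hgI.injective,
        TLAux.graph_execFun hgI.injective hhI.injective,
        TLAux.execR_assoc]
  funext x
  have hx : graphRel (execFun f (execFun g h)) x (execFun (execFun f g) h x) := by
    rw [← hEq]; exact rfl
  replace hx : execFun f (execFun g h) x = execFun (execFun f g) h x := hx
  exact hx.symm
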